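/- Let V be a finite-dimensional ℂ(q)-vector space with a Hermitian inner product, and let B be an almost orthonormal basis of V (each b ∈ B satisfies lt(b) = 1 and (b,b') ∈ q⁻¹K_∞ for b ≠ b'). Then the K_∞-lattice L_V := { v ∈ V : (v,v) ∈ K_∞ } equals the K_∞-span of B. -/

import Mathlib

open Polynomial

noncomputable section

/-- `K = ℂ(q)`, with `RatFunc.X` playing the role of `q`. -/
abbrev Kq : Type := RatFunc ℂ

/-- The conjugation on `ℂ(q)` extending complex conjugation with `q* = q`. -/
noncomputable def qconj : Kq →+* Kq :=
  RatFunc.mapRingHom (Polynomial.mapRingHom (starRingEnd ℂ))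
    (by
      intro p hp
      simp only [Submonoid.mem_comap, mem_nonZeroDivisors_iff_ne_zero] at *
      simpa using hp)

/-- The leading coefficient `lc(c)` of a rational function. -/
noncomputable def lcoef (c : Kq) : ℂ := c.num.leadingCoeff / c.denom.leadingCoeff

/-- Membership in `K_∞`, the subring of rational functions regular at `q = ∞`:
those of degree `≤ 0`. -/
def memKinf (c : Kq) : Prop := c.intDegree ≤ 0

/-- Membership in `q⁻¹K_∞`: zero or degree `≤ −1`. -/
def memqinvKinf (c : Kq) : Prop := c = 0 ∨ c.intDegree ≤ -1

namespace St2Aux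
open RatFunc

lemma amap_ne_zero {p : ℂ[X]} (hp : p ≠ 0) : algebraMap ℂ[X] Kq p ≠ 0 :=
  RatFunc.algebraMap_ne_zero hp

lemma lcoef_zero : lcoef 0 = 0 := by
  simp [lcoef, RatFunc.num_zero]

lemma lcoef_ne_zero {x : Kq} (hx : x ≠ 0) : lcoef x ≠ 0 :=
  div_ne_zero (leadingCoeff_ne_zero.mpr (num_ne_zero hx))
    (leadingCoeff_ne_zero.mpr (denom_ne_zero x))

lemma repr_spec {p q : ℂ[X]} (hp : p ≠ 0) (hq : q ≠ 0) :
    (algebraMap ℂ[X] Kq p / algebraMap ℂ[X] Kq q).intDegree = (p.natDegree : ℤ) - q.natDegree ∧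
      lcoef (algebraMap ℂ[X] Kq p / algebraMap ℂ[X] Kq q) = p.leadingCoeff / q.leadingCoeff := by
  set c : Kq := algebraMap ℂ[X] Kq p / algebraMap ℂ[X] Kq q with hc
  have hc0 : c ≠ 0 := div_ne_zero (amap_ne_zero hp) (amap_ne_zero hq)
  have h2 : algebraMap ℂ[X] Kq c.num / algebraMap ℂ[X] Kq c.denom
      = algebraMap ℂ[X] Kq p / algebraMap ℂ[X] Kq q := by rw [num_div_denom]
  have h3 := (div_eq_div_iff (amap_ne_zero (denom_ne_zero c)) (amap_ne_zero hq)).mp h2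
  have key : c.num * q = p * c.denom := by
    apply IsFractionRing.injective ℂ[X] Kq
    rw [map_mul, map_mul]; exact h3
  constructor
  · exact natDegree_sub_eq_of_prod_eq (num_ne_zero hc0) (denom_ne_zero c) hp hq key
  · have hlc : c.num.leadingCoeff * q.leadingCoeff = p.leadingCoeff * c.denom.leadingCoeff := by
      rw [← leadingCoeff_mul, ← leadingCoeff_mul, key]
    rw [lcoef, div_eq_div_iff (leadingCoeff_ne_zero.mpr (denom_ne_zero c))
      (leadingCoeff_ne_zero.mpr hq)]
    exact hlc

lemma lcoef_mul {x y : Kq} (hx : x ≠ 0) (hy : y ≠ 0) : lcoef (x * y) = lcoef x * lcoef y := by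
  have hxy : x * y = algebraMap ℂ[X] Kq (x.num * y.num) /
      algebraMap ℂ[X] Kq (x.denom * y.denom) := by
    rw [map_mul, map_mul, ← div_mul_div_comm, num_div_denom, num_div_denom]
  rw [hxy, (repr_spec (mul_ne_zero (num_ne_zero hx) (num_ne_zero hy))
    (mul_ne_zero (denom_ne_zero x) (denom_ne_zero y))).2,
    leadingCoeff_mul, leadingCoeff_mul, lcoef, lcoef, div_mul_div_comm]

lemma poly_add_top {A B : ℂ[X]} (hB : B.natDegree ≤ A.natDegree)
    (h : A.leadingCoeff + B.coeff A.natDegree ≠ 0) :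
    (A + B).natDegree = A.natDegree ∧
      (A + B).leadingCoeff = A.leadingCoeff + B.coeff A.natDegree := by
  have hcoeff : (A + B).coeff A.natDegree = A.leadingCoeff + B.coeff A.natDegree := by
    rw [coeff_add, coeff_natDegree]
  have h1 : A.natDegree ≤ (A + B).natDegree := le_natDegree_of_ne_zero (by rw [hcoeff]; exact h)
  have h2 : (A + B).natDegree ≤ A.natDegree :=
    (natDegree_add_le A B).trans (max_le le_rfl hB)
  have he : (A + B).natDegree = A.natDegree := le_antisymm h2 h1
  exact ⟨he, by rw [leadingCoeff, he, hcoeff]⟩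

lemma add_repr (x y : Kq) :
    x + y = algebraMap ℂ[X] Kq (x.num * y.denom + x.denom * y.num) /
      algebraMap ℂ[X] Kq (x.denom * y.denom) := by
  rw [map_add, map_mul, map_mul, map_mul,
    ← div_add_div _ _ (amap_ne_zero (denom_ne_zero x)) (amap_ne_zero (denom_ne_zero y)),
    num_div_denom, num_div_denom]

lemma add_spec_eq {x y : Kq} (hx : x ≠ 0) (hy : y ≠ 0) (hdeg : x.intDegree = y.intDegree)
    (hlc : lcoef x + lcoef y ≠ 0) :
    x + y ≠ 0 ∧ (x + y).intDegree = x.intDegree ∧ lcoef (x + y) = lcoef x + lcoef y := by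
  set A := x.num * y.denom with hA
  set B := x.denom * y.num with hB
  have hA0 : A ≠ 0 := mul_ne_zero (num_ne_zero hx) (denom_ne_zero y)
  have hB0 : B ≠ 0 := mul_ne_zero (denom_ne_zero x) (num_ne_zero hy)
  have hdA : A.natDegree = x.num.natDegree + y.denom.natDegree :=
    natDegree_mul (num_ne_zero hx) (denom_ne_zero y)
  have hdB : B.natDegree = x.denom.natDegree + y.num.natDegree :=
    natDegree_mul (denom_ne_zero x) (num_ne_zero hy)
  have hdegAB : B.natDegree = A.natDegree := by
    rw [intDegree, intDegree] at hdeg; omega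
  have hlcdx : x.denom.leadingCoeff ≠ 0 := leadingCoeff_ne_zero.mpr (denom_ne_zero x)
  have hlcdy : y.denom.leadingCoeff ≠ 0 := leadingCoeff_ne_zero.mpr (denom_ne_zero y)
  have hcB : B.coeff A.natDegree = B.leadingCoeff := by rw [← hdegAB, coeff_natDegree]
  have hlcsum : A.leadingCoeff + B.coeff A.natDegree =
      x.denom.leadingCoeff * y.denom.leadingCoeff * (lcoef x + lcoef y) := by
    rw [hcB, hA, hB, leadingCoeff_mul, leadingCoeff_mul, lcoef, lcoef]
    field_simp
  have hlcsum0 : A.leadingCoeff + B.coeff A.natDegree ≠ 0 := by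
    rw [hlcsum]; exact mul_ne_zero (mul_ne_zero hlcdx hlcdy) hlc
  obtain ⟨hPdeg, hPlc⟩ := poly_add_top (le_of_eq hdegAB) hlcsum0
  have hP0 : A + B ≠ 0 := leadingCoeff_ne_zero.mp (by rw [hPlc]; exact hlcsum0)
  have hQ0 : x.denom * y.denom ≠ 0 := mul_ne_zero (denom_ne_zero x) (denom_ne_zero y)
  have hrepr := add_repr x y
  have hspec := repr_spec hP0 hQ0
  have hxy0 : x + y ≠ 0 := by
    rw [hrepr]; exact div_ne_zero (amap_ne_zero hP0) (amap_ne_zero hQ0)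
  refine ⟨hxy0, ?_, ?_⟩
  · rw [hrepr, hspec.1, hPdeg, hdA, natDegree_mul (denom_ne_zero x) (denom_ne_zero y), intDegree]
    push_cast; ring
  · rw [hrepr, hspec.2, hPlc, hlcsum, leadingCoeff_mul]
    field_simp

lemma add_spec_lt {x y : Kq} (hx : x ≠ 0) (hy : y ≠ 0) (hdeg : y.intDegree < x.intDegree) :
    x + y ≠ 0 ∧ (x + y).intDegree = x.intDegree ∧ lcoef (x + y) = lcoef x := by
  set A := x.num * y.denom with hA
  set B := x.denom * y.num with hB
  have hA0 : A ≠ 0 := mul_ne_zero (num_ne_zero hx) (denom_ne_zero y)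
  have hB0 : B ≠ 0 := mul_ne_zero (denom_ne_zero x) (num_ne_zero hy)
  have hdA : A.natDegree = x.num.natDegree + y.denom.natDegree :=
    natDegree_mul (num_ne_zero hx) (denom_ne_zero y)
  have hdB : B.natDegree = x.denom.natDegree + y.num.natDegree :=
    natDegree_mul (denom_ne_zero x) (num_ne_zero hy)
  have hdegAB : B.natDegree < A.natDegree := by
    rw [intDegree, intDegree] at hdeg; omega
  have hcB : B.coeff A.natDegree = 0 := coeff_eq_zero_of_natDegree_lt hdegAB
  have hlcA : A.leadingCoeff ≠ 0 := leadingCoeff_ne_zero.mpr hA0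
  have hlcsum0 : A.leadingCoeff + B.coeff A.natDegree ≠ 0 := by rw [hcB, add_zero]; exact hlcA
  obtain ⟨hPdeg, hPlc⟩ := poly_add_top (le_of_lt hdegAB) hlcsum0
  rw [hcB, add_zero] at hPlc
  have hP0 : A + B ≠ 0 := leadingCoeff_ne_zero.mp (by rw [hPlc]; exact hlcA)
  have hQ0 : x.denom * y.denom ≠ 0 := mul_ne_zero (denom_ne_zero x) (denom_ne_zero y)
  have hrepr := add_repr x y
  have hspec := repr_spec hP0 hQ0
  have hxy0 : x + y ≠ 0 := by
    rw [hrepr]; exact div_ne_zero (amap_ne_zero hP0) (amap_ne_zero hQ0)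
  refine ⟨hxy0, ?_, ?_⟩
  · rw [hrepr, hspec.1, hPdeg, hdA, natDegree_mul (denom_ne_zero x) (denom_ne_zero y), intDegree]
    push_cast; ring
  · rw [hrepr, hspec.2, hPlc, hA, leadingCoeff_mul, leadingCoeff_mul, lcoef]
    rw [mul_div_mul_right _ _ (leadingCoeff_ne_zero.mpr (denom_ne_zero y))]

lemma qconj_apply_div (p q : ℂ[X]) :
    qconj (algebraMap ℂ[X] Kq p / algebraMap ℂ[X] Kq q) =
      algebraMap ℂ[X] Kq (p.map (starRingEnd ℂ)) /
        algebraMap ℂ[X] Kq (q.map (starRingEnd ℂ)) := by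
  show (RatFunc.mapRingHom _ _ : Kq → Kq) _ = _
  rw [RatFunc.coe_mapRingHom_eq_coe_map, RatFunc.map_apply_div]
  simp

lemma qconj_spec {x : Kq} (hx : x ≠ 0) :
    qconj x ≠ 0 ∧ (qconj x).intDegree = x.intDegree ∧
      lcoef (qconj x) = starRingEnd ℂ (lcoef x) := by
  have h0 : qconj x ≠ 0 := fun h => hx (qconj.injective (by rw [h, map_zero]))
  have hn : x.num.map (starRingEnd ℂ) ≠ 0 := by
    simpa [Polynomial.map_eq_zero] using num_ne_zero hx
  have hd : x.denom.map (starRingEnd ℂ) ≠ 0 := by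
    simpa [Polynomial.map_eq_zero] using denom_ne_zero x
  have hrw : qconj x = algebraMap ℂ[X] Kq (x.num.map (starRingEnd ℂ)) /
      algebraMap ℂ[X] Kq (x.denom.map (starRingEnd ℂ)) := by
    conv_lhs => rw [← num_div_denom x]
    exact qconj_apply_div _ _
  have hspec := repr_spec hn hd
  refine ⟨h0, ?_, ?_⟩
  · rw [hrw, hspec.1, natDegree_map, natDegree_map, intDegree]
  · rw [hrw, hspec.2, leadingCoeff_map, leadingCoeff_map, lcoef, map_div₀]

/-- terms with top degree `n` and positive real leading coefficient -/
def Good (n : ℤ) (x : Kq) : Prop :=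
  x ≠ 0 ∧ x.intDegree = n ∧ 0 < (lcoef x).re ∧ (lcoef x).im = 0

/-- negligible terms -/
def Small (n : ℤ) (x : Kq) : Prop := x = 0 ∨ x.intDegree < n

lemma good_add_good {n : ℤ} {x y : Kq} (hx : Good n x) (hy : Good n y) : Good n (x + y) := by
  obtain ⟨hx0, hxd, hxre, hxim⟩ := hx
  obtain ⟨hy0, hyd, hyre, hyim⟩ := hy
  have hlc : lcoef x + lcoef y ≠ 0 := by
    intro h
    have : (lcoef x + lcoef y).re = 0 := by rw [h]; simp
    rw [Complex.add_re] at this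
    linarith
  obtain ⟨h0, hd, hl⟩ := add_spec_eq hx0 hy0 (hxd.trans hyd.symm) hlc
  exact ⟨h0, hd.trans hxd, by rw [hl, Complex.add_re]; linarith,
    by rw [hl, Complex.add_im, hxim, hyim, add_zero]⟩

lemma good_add_small {n : ℤ} {x y : Kq} (hx : Good n x) (hy : Small n y) : Good n (x + y) := by
  obtain ⟨hx0, hxd, hxre, hxim⟩ := hx
  rcases hy with rfl | hyd
  · simpa using ⟨hx0, hxd, hxre, hxim⟩
  · rcases eq_or_ne y 0 with rfl | hy0
    · simpa using ⟨hx0, hxd, hxre, hxim⟩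
    obtain ⟨h0, hd, hl⟩ := add_spec_lt hx0 hy0 (by omega)
    exact ⟨h0, hd.trans hxd, by rw [hl]; exact hxre, by rw [hl]; exact hxim⟩

lemma small_add_small {n : ℤ} {x y : Kq} (hx : Small n x) (hy : Small n y) :
    Small n (x + y) := by
  rcases hx with rfl | hxd
  · simpa using hy
  rcases hy with rfl | hyd
  · simpa [Small] using Or.inr hxd
  rcases eq_or_ne (x + y) 0 with h | h
  · exact Or.inl h
  rcases eq_or_ne y 0 with rfl | hy0
  · simpa [Small] using Or.inr hxd
  right
  calc (x + y).intDegree ≤ max x.intDegree y.intDegree := intDegree_add_le hy0 h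
    _ < n := max_lt hxd hyd

lemma gos_sum {α : Type} (s : Finset α) (f : α → Kq) (n : ℤ)
    (h : ∀ a ∈ s, Good n (f a) ∨ Small n (f a)) :
    Good n (∑ a ∈ s, f a) ∨ Small n (∑ a ∈ s, f a) := by
  refine Finset.sum_induction f (fun x => Good n x ∨ Small n x) ?_ (Or.inr (Or.inl rfl)) h
  rintro x y (hx | hx) (hy | hy)
  · exact Or.inl (good_add_good hx hy)
  · exact Or.inl (good_add_small hx hy)
  · exact Or.inl (by rw [add_comm]; exact good_add_small hy hx)
  · exact Or.inr (small_add_small hx hy)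

lemma good_sum {α : Type} [DecidableEq α] (s : Finset α) (f : α → Kq) (n : ℤ)
    (h : ∀ a ∈ s, Good n (f a) ∨ Small n (f a)) {a : α} (ha : a ∈ s) (hg : Good n (f a)) :
    Good n (∑ x ∈ s, f x) := by
  rw [← Finset.add_sum_erase s f ha]
  have hrest := gos_sum (s.erase a) f n (fun x hx => h x (Finset.mem_of_mem_erase hx))
  rcases hrest with hr | hr
  · exact good_add_good hg hr
  · exact good_add_small hg hr

lemma memKinf_zero : memKinf 0 := by simp [memKinf]

lemma memKinf_add {x y : Kq} (hx : memKinf x) (hy : memKinf y) : memKinf (x + y) := by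
  rcases eq_or_ne y 0 with rfl | hy0
  · simpa using hx
  rcases eq_or_ne (x + y) 0 with h | h
  · simp [memKinf, h]
  exact le_trans (intDegree_add_le hy0 h) (max_le hx hy)

lemma memKinf_mul {x y : Kq} (hx : memKinf x) (hy : memKinf y) : memKinf (x * y) := by
  rcases eq_or_ne x 0 with rfl | hx0
  · simp [memKinf]
  rcases eq_or_ne y 0 with rfl | hy0
  · simp [memKinf]
  rw [memKinf, intDegree_mul hx0 hy0]
  exact add_nonpos hx hy

lemma memKinf_sum {α : Type} (s : Finset α) (f : α → Kq)
    (h : ∀ a ∈ s, memKinf (f a)) : memKinf (∑ a ∈ s, f a) :=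
  Finset.sum_induction f memKinf (fun _ _ => memKinf_add) memKinf_zero h

lemma memKinf_qconj {x : Kq} (hx : memKinf x) : memKinf (qconj x) := by
  rcases eq_or_ne x 0 with rfl | hx0
  · simp [memKinf]
  rw [memKinf, (qconj_spec hx0).2.1]
  exact hx

end St2Aux

open St2Aux in
/-- If `B` is an almost orthonormal basis of a finite-dimensional `ℂ(q)`-vector space `V`
with a Hermitian inner product, then the lattice `L_V = {v : (v,v) ∈ K_∞}` equals the
`K_∞`-span of `B`. -/
theorem statement2 (V : Type) [AddCommGroup V] [Module Kq V] [FiniteDimensional Kq V]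
    (B : V → V → Kq)
    (hlin : ∀ (a b : Kq) (u v w : V), B (a • u + b • v) w = a * B u w + b * B v w)
    (hsymm : ∀ u v : V, B v u = qconj (B u v))
    (hpos : ∀ v : V, (lcoef (B v v)).im = 0 ∧ 0 ≤ (lcoef (B v v)).re)
    (hdef : ∀ v : V, lcoef (B v v) = 0 → v = 0)
    (heven : ∀ v : V, B v v ≠ 0 → Even (B v v).intDegree)
    (ι : Type) [Fintype ι] (b : Module.Basis ι Kq V)
    -- each basis vector is almost normal: `lt(b i) = 1`
    (hnorm : ∀ i : ι, lcoef (B (b i) (b i)) = 1 ∧ (B (b i) (b i)).intDegree = 0)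
    -- distinct basis vectors are almost orthogonal: `(b i, b j) ∈ q⁻¹K_∞`
    (horth : ∀ i j : ι, i ≠ j → memqinvKinf (B (b i) (b j))) :
    {v : V | memKinf (B v v)} =
      {v : V | ∃ c : ι → Kq, (∀ i, memKinf (c i)) ∧ v = ∑ i, c i • b i} := by
  classical
  -- bilinearity in the first slot
  have hBadd : ∀ u v w : V, B (u + v) w = B u w + B v w := by
    intro u v w
    have := hlin 1 1 u v w
    simpa using this
  have hBsmul : ∀ (a : Kq) (u w : V), B (a • u) w = a * B u w := by
    intro a u w
    have := hlin a 0 u u w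
    simpa using this
  have hsum1 : ∀ (c : ι → Kq) (w : V), B (∑ i, c i • b i) w = ∑ i, c i * B (b i) w := by
    intro c w
    let g : V →+ Kq := AddMonoidHom.mk' (fun v => B v w) (fun u v => hBadd u v w)
    have hg : B (∑ i, c i • b i) w = g (∑ i, c i • b i) := rfl
    rw [hg, map_sum]
    exact Finset.sum_congr rfl fun i _ => hBsmul (c i) (b i) w
  have hexp : ∀ c : ι → Kq,
      B (∑ i, c i • b i) (∑ i, c i • b i) =
        ∑ i, ∑ j, c i * (qconj (c j) * B (b i) (b j)) := by
    intro c
    rw [hsum1]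
    refine Finset.sum_congr rfl fun i _ => ?_
    rw [hsymm (∑ j, c j • b j) (b i), hsum1, map_sum, Finset.mul_sum]
    refine Finset.sum_congr rfl fun j _ => ?_
    rw [map_mul, ← hsymm (b j) (b i)]
  have hBii : ∀ i : ι, B (b i) (b i) ≠ 0 := by
    intro i h
    have h1 := (hnorm i).1
    rw [h, lcoef_zero] at h1
    exact one_ne_zero h1.symm
  ext v
  simp only [Set.mem_setOf_eq]
  constructor
  · -- lattice element ⟹ coefficients in K_∞
    intro hv
    refine ⟨fun i => b.repr v i, ?_, (b.sum_repr v).symm⟩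
    set c : ι → Kq := fun i => b.repr v i with hc
    by_contra hcon
    push_neg at hcon
    obtain ⟨i0, hi0⟩ := hcon
    have hi0' : 0 < (c i0).intDegree := not_le.mp hi0
    have hvv : B v v = ∑ i, ∑ j, c i * (qconj (c j) * B (b i) (b j)) := by
      conv_lhs => rw [← b.sum_repr v]
      exact hexp c
    set d : ℤ := Finset.univ.sup' ⟨i0, Finset.mem_univ i0⟩ (fun i => (c i).intDegree) with hd
    have hle : ∀ i, (c i).intDegree ≤ d := fun i => Finset.le_sup' (fun i => (c i).intDegree) (Finset.mem_univ i)
    have hdpos : 0 < d := lt_of_lt_of_le hi0' (hle i0)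
    obtain ⟨i1, -, hi1⟩ :=
      Finset.exists_mem_eq_sup' (⟨i0, Finset.mem_univ i0⟩ : Finset.univ.Nonempty)
        (fun i => (c i).intDegree)
    have hci1 : c i1 ≠ 0 := by
      intro h
      rw [← hd] at hi1
      rw [h, RatFunc.intDegree_zero] at hi1
      omega
    -- classify the diagonal terms with nonzero coefficient
    have hdiag : ∀ i : ι, c i ≠ 0 →
        (c i * (qconj (c i) * B (b i) (b i))).intDegree = 2 * (c i).intDegree ∧
        Good (2 * (c i).intDegree) (c i * (qconj (c i) * B (b i) (b i))) := by
      intro i hci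
      obtain ⟨hq0, hqd, hql⟩ := qconj_spec hci
      have hmul0 : qconj (c i) * B (b i) (b i) ≠ 0 := mul_ne_zero hq0 (hBii i)
      have ht0 : c i * (qconj (c i) * B (b i) (b i)) ≠ 0 := mul_ne_zero hci hmul0
      have hdeg : (c i * (qconj (c i) * B (b i) (b i))).intDegree = 2 * (c i).intDegree := by
        rw [RatFunc.intDegree_mul hci hmul0, RatFunc.intDegree_mul hq0 (hBii i), hqd,
          (hnorm i).2]
        ring
      have hlc : lcoef (c i * (qconj (c i) * B (b i) (b i))) =
          (Complex.normSq (lcoef (c i)) : ℂ) := by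
        rw [lcoef_mul hci hmul0, lcoef_mul hq0 (hBii i), hql, (hnorm i).1, mul_one,
          Complex.mul_conj]
      refine ⟨hdeg, ht0, hdeg, ?_, ?_⟩
      · rw [hlc, Complex.ofReal_re]
        exact Complex.normSq_pos.mpr (lcoef_ne_zero hci)
      · rw [hlc, Complex.ofReal_im]
    -- each term is Good (2d) or Small (2d)
    have hterm : ∀ i j : ι,
        Good (2 * d) (c i * (qconj (c j) * B (b i) (b j))) ∨
          Small (2 * d) (c i * (qconj (c j) * B (b i) (b j))) := by
      intro i j
      rcases eq_or_ne (c i) 0 with hci | hci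
      · right; left; rw [hci, zero_mul]
      rcases eq_or_ne (c j) 0 with hcj | hcj
      · right; left; rw [hcj, map_zero, zero_mul, mul_zero]
      obtain ⟨hq0, hqd, hql⟩ := qconj_spec hcj
      rcases eq_or_ne i j with rfl | hij
      · obtain ⟨hdeg, hgood⟩ := hdiag i hci
        rcases eq_or_ne ((c i).intDegree) d with he | hne
        · left; rw [← he]; exact hgood
        · right; right
          rw [hdeg]
          have := hle i
          omega
      · -- off-diagonal : small
        rcases horth i j hij with hB0 | hBd
        · right; left; rw [hB0, mul_zero, mul_zero]
        have hBij : B (b i) (b j) ≠ 0 := by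
          intro h; rw [h, RatFunc.intDegree_zero] at hBd; omega
        right; right
        have hmul0 : qconj (c j) * B (b i) (b j) ≠ 0 := mul_ne_zero hq0 hBij
        rw [RatFunc.intDegree_mul hci hmul0, RatFunc.intDegree_mul hq0 hBij, hqd]
        have h1 := hle i
        have h2 := hle j
        omega
    -- the i1 diagonal term is Good (2d)
    have hgi1 : Good (2 * d) (c i1 * (qconj (c i1) * B (b i1) (b i1))) := by
      obtain ⟨hdeg, hgood⟩ := hdiag i1 hci1
      rw [← hd] at hi1
      rw [hi1]
      exact hgood
    have hinner : Good (2 * d) (∑ j, c i1 * (qconj (c j) * B (b i1) (b j))) :=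
      good_sum Finset.univ _ _ (fun j _ => hterm i1 j) (Finset.mem_univ i1) hgi1
    have houter : Good (2 * d) (∑ i, ∑ j, c i * (qconj (c j) * B (b i) (b j))) :=
      good_sum Finset.univ _ _
        (fun i _ => gos_sum Finset.univ _ _ (fun j _ => hterm i j))
        (Finset.mem_univ i1) hinner
    rw [memKinf, hvv] at hv
    have := houter.2.1
    omega
  · -- span element ⟹ lattice element
    rintro ⟨c, hcK, rfl⟩
    rw [hexp c]
    apply memKinf_sum
    intro i _
    apply memKinf_sum
    intro j _
    apply memKinf_mul (hcK i)
    apply memKinf_mul (memKinf_qconj (hcK j))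
    rcases eq_or_ne i j with rfl | hij
    · rw [memKinf, (hnorm i).2]
    · rcases horth i j hij with h | h
      · rw [h]; exact memKinf_zero
      · exact le_trans h (by norm_num)
end
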